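/- Let f and g be real-valued C² functions defined on open subsets of ℝⁿ, and let c(x,y) = √((f(x) − g(y))² + |x − y|²) at a point (x,y) with f(x) ≠ g(y). Define u = ((f(x) − g(y))∇g(y) + x − y)/c(x,y) and v = ((g(y) − f(x))∇f(x) + y − x)/c(x,y). Then the mixed second partial derivatives of c are given entrywise by ∂²c/∂xᵢ∂y_j (x,y) = −(1/c(x,y)) ( vᵢ u_j + ∂f/∂xᵢ(x) · ∂g/∂y_j(y) + δ_{ij} ) for 1 ≤ i, j ≤ n, where δ_{ij} is the Kronecker delta. -/

import Mathlib

open Real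

lemma grad_coord {n : ℕ} (f : EuclideanSpace ℝ (Fin n) → ℝ)
    (x : EuclideanSpace ℝ (Fin n)) (k : Fin n) :
    (gradient f x) k = fderiv ℝ f x (EuclideanSpace.single k 1) := by
  have h : (inner ℝ (gradient f x) (EuclideanSpace.single k (1:ℝ)) : ℝ)
      = fderiv ℝ f x (EuclideanSpace.single k 1) := by
    rw [gradient]
    exact InnerProductSpace.toDual_symm_apply
  rw [EuclideanSpace.inner_single_right] at h
  simpa using h

lemma aux_inner {n : ℕ} (g : EuclideanSpace ℝ (Fin n) → ℝ)
    (y : EuclideanSpace ℝ (Fin n)) (hg : DifferentiableAt ℝ g y)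
    (a : ℝ) (p : EuclideanSpace ℝ (Fin n))
    (hpos : 0 < (a - g y) ^ 2 + ‖p - y‖ ^ 2) (j : Fin n) :
    fderiv ℝ (fun y' => Real.sqrt ((a - g y') ^ 2 + ‖p - y'‖ ^ 2)) y
      (EuclideanSpace.single j 1)
    = -(((a - g y) * fderiv ℝ g y (EuclideanSpace.single j 1) + (p j - y j)) *
        (Real.sqrt ((a - g y) ^ 2 + ‖p - y‖ ^ 2))⁻¹) := by
  have hgy := hg.hasFDerivAt
  have hA : HasFDerivAt (fun y' => a - g y') (-fderiv ℝ g y) y := by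
    exact hgy.const_sub a
  have hB : HasFDerivAt (fun y' : EuclideanSpace ℝ (Fin n) => p - y')
      (-(ContinuousLinearMap.id ℝ (EuclideanSpace ℝ (Fin n)))) y := by
    exact (hasFDerivAt_id (𝕜 := ℝ) y).const_sub p
  have hQ : HasFDerivAt (fun y' => (a - g y') ^ 2 + ‖p - y'‖ ^ 2)
      (((a - g y) • (-fderiv ℝ g y) + (a - g y) • (-fderiv ℝ g y)) +
        (2 • (innerSL ℝ (p - y)).comp
          (-(ContinuousLinearMap.id ℝ (EuclideanSpace ℝ (Fin n)))))) y := by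
    simpa [pow_two, Pi.mul_def, Pi.add_def] using (hA.mul hA).add hB.norm_sq
  have hQne : (a - g y) ^ 2 + ‖p - y‖ ^ 2 ≠ 0 := ne_of_gt hpos
  have hD := hQ.sqrt hQne
  rw [hD.fderiv]
  have hsne : Real.sqrt ((a - g y) ^ 2 + ‖p - y‖ ^ 2) ≠ 0 :=
    Real.sqrt_ne_zero'.mpr hpos
  have hip : (inner ℝ (p - y) (EuclideanSpace.single j (1:ℝ)) : ℝ) = p j - y j := by
    rw [EuclideanSpace.inner_single_right]; simp
  simp only [ContinuousLinearMap.smul_apply, ContinuousLinearMap.add_apply,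
    ContinuousLinearMap.neg_apply, ContinuousLinearMap.comp_apply,
    ContinuousLinearMap.coe_id', id_eq, innerSL_apply_apply, inner_neg_right, hip, smul_eq_mul,
    ContinuousLinearMap.coe_smul', Pi.smul_apply, nsmul_eq_mul, Nat.cast_ofNat]
  field_simp
  ring

set_option maxHeartbeats 1000000 in
theorem mixed_second_partials_cost {n : ℕ}
    (f g : EuclideanSpace ℝ (Fin n) → ℝ)
    (U V : Set (EuclideanSpace ℝ (Fin n))) (hU : IsOpen U) (hV : IsOpen V)
    (hf : ContDiffOn ℝ 2 f U) (hg : ContDiffOn ℝ 2 g V)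
    (x y : EuclideanSpace ℝ (Fin n)) (hx : x ∈ U) (hy : y ∈ V)
    (hfg : f x ≠ g y) :
    ∀ i j : Fin n,
      fderiv ℝ (fun x' => fderiv ℝ
          (fun y' => Real.sqrt ((f x' - g y') ^ 2 + ‖x' - y'‖ ^ 2)) y
          (EuclideanSpace.single j 1)) x (EuclideanSpace.single i 1)
      = -(Real.sqrt ((f x - g y) ^ 2 + ‖x - y‖ ^ 2))⁻¹ *
        ( ((Real.sqrt ((f x - g y) ^ 2 + ‖x - y‖ ^ 2))⁻¹ •
            ((g y - f x) • gradient f x + (y - x)) : EuclideanSpace ℝ (Fin n)) i *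
          ((Real.sqrt ((f x - g y) ^ 2 + ‖x - y‖ ^ 2))⁻¹ •
            ((f x - g y) • gradient g y + (x - y)) : EuclideanSpace ℝ (Fin n)) j +
          fderiv ℝ f x (EuclideanSpace.single i 1) *
            fderiv ℝ g y (EuclideanSpace.single j 1) +
          (if i = j then 1 else 0) ) := by
  intro i j
  have hf1 : DifferentiableAt ℝ f x :=
    (hf.differentiableOn two_ne_zero).differentiableAt (hU.mem_nhds hx)
  have hg1 : DifferentiableAt ℝ g y :=
    (hg.differentiableOn two_ne_zero).differentiableAt (hV.mem_nhds hy)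
  have hpos0 : 0 < (f x - g y) ^ 2 + ‖x - y‖ ^ 2 :=
    add_pos_of_pos_of_nonneg (pow_pos (abs_pos.mpr (sub_ne_zero.mpr hfg)) 2 |> fun h => by
      simpa [sq_abs] using h) (sq_nonneg _)
  have hQne : (f x - g y) ^ 2 + ‖x - y‖ ^ 2 ≠ 0 := ne_of_gt hpos0
  set c := Real.sqrt ((f x - g y) ^ 2 + ‖x - y‖ ^ 2) with hcdef
  have hcpos : 0 < c := Real.sqrt_pos.mpr hpos0
  have hcne : c ≠ 0 := ne_of_gt hcpos
  have hc2 : c ^ 2 = (f x - g y) ^ 2 + ‖x - y‖ ^ 2 := Real.sq_sqrt (le_of_lt hpos0)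
  -- eventual equality of the inner derivative with an explicit formula
  have hQc : ContinuousAt (fun x' => (f x' - g y) ^ 2 + ‖x' - y‖ ^ 2) x := by
    exact ((hf1.continuousAt.sub continuousAt_const).pow 2).add
      (((continuousAt_id.sub continuousAt_const).norm).pow 2)
  have hev1 : ∀ᶠ x' in nhds x, 0 < (f x' - g y) ^ 2 + ‖x' - y‖ ^ 2 :=
    hQc.eventually (eventually_gt_nhds hpos0)
  have hev : (fun x' => fderiv ℝ
        (fun y' => Real.sqrt ((f x' - g y') ^ 2 + ‖x' - y'‖ ^ 2)) y
        (EuclideanSpace.single j 1))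
      =ᶠ[nhds x] fun x' =>
        -(((f x' - g y) * fderiv ℝ g y (EuclideanSpace.single j 1) + (x' j - y j)) *
          (Real.sqrt ((f x' - g y) ^ 2 + ‖x' - y‖ ^ 2))⁻¹) := by
    filter_upwards [hev1] with x' hx'
    exact aux_inner g y hg1 (f x') x' hx' j
  rw [hev.fderiv_eq]
  -- now differentiate the explicit formula
  have hfx : HasFDerivAt f (fderiv ℝ f x) x := hf1.hasFDerivAt
  have hA : HasFDerivAt (fun x' => f x' - g y) (fderiv ℝ f x) x := hfx.sub_const _
  have hproj : HasFDerivAt (fun x' : EuclideanSpace ℝ (Fin n) => x' j - y j)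
      (EuclideanSpace.proj j : EuclideanSpace ℝ (Fin n) →L[ℝ] ℝ) x := by
    simpa using ((EuclideanSpace.proj j : EuclideanSpace ℝ (Fin n) →L[ℝ] ℝ).hasFDerivAt (x := x)).sub_const (y j)
  have hN : HasFDerivAt
      (fun x' => (f x' - g y) * fderiv ℝ g y (EuclideanSpace.single j 1) + (x' j - y j))
      ((fderiv ℝ g y (EuclideanSpace.single j 1)) • fderiv ℝ f x +
        (EuclideanSpace.proj j : EuclideanSpace ℝ (Fin n) →L[ℝ] ℝ)) x :=
    (hA.mul_const _).add hproj
  have hQ : HasFDerivAt (fun x' => (f x' - g y) ^ 2 + ‖x' - y‖ ^ 2)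
      (((f x - g y) • fderiv ℝ f x + (f x - g y) • fderiv ℝ f x) +
        (2 • (innerSL ℝ (x - y)).comp
          (ContinuousLinearMap.id ℝ (EuclideanSpace ℝ (Fin n))))) x := by
    simpa [pow_two, Pi.mul_def, Pi.add_def] using (hA.mul hA).add ((hasFDerivAt_id x).sub_const y).norm_sq
  have hD := hQ.sqrt hQne
  have hInv : HasFDerivAt
      (fun x' => (Real.sqrt ((f x' - g y) ^ 2 + ‖x' - y‖ ^ 2))⁻¹)
      ((-(c ^ 2)⁻¹) • ((1 / (2 * c)) •
        (((f x - g y) • fderiv ℝ f x + (f x - g y) • fderiv ℝ f x) +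
        (2 • (innerSL ℝ (x - y)).comp
          (ContinuousLinearMap.id ℝ (EuclideanSpace ℝ (Fin n))))))) x :=
    (hasDerivAt_inv hcne).comp_hasFDerivAt x hD
  have hψ : HasFDerivAt (fun x' =>
      -(((f x' - g y) * fderiv ℝ g y (EuclideanSpace.single j 1) + (x' j - y j)) *
        (Real.sqrt ((f x' - g y) ^ 2 + ‖x' - y‖ ^ 2))⁻¹)) _ x := (hN.mul hInv).neg
  rw [hψ.fderiv]
  have hip : (inner ℝ (x - y) (EuclideanSpace.single i (1:ℝ)) : ℝ) = x i - y i := by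
    rw [EuclideanSpace.inner_single_right]; simp
  have hgf := grad_coord f x
  have hgg := grad_coord g y
  simp only [ContinuousLinearMap.neg_apply, ContinuousLinearMap.add_apply,
    ContinuousLinearMap.smul_apply, ContinuousLinearMap.comp_apply,
    ContinuousLinearMap.coe_id', id_eq, innerSL_apply_apply, hip, smul_eq_mul,
    ContinuousLinearMap.coe_smul', Pi.smul_apply, nsmul_eq_mul, Nat.cast_ofNat,
    PiLp.proj_apply, EuclideanSpace.single_apply,
    PiLp.smul_apply, PiLp.add_apply, PiLp.sub_apply, hgf, hgg]
  rw [show (if i = j then (1:ℝ) else 0) = (if i = j then (1:ℝ) else 0) from rfl]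
  have hsub : ((x : EuclideanSpace ℝ (Fin n)) - y) i = x i - y i := rfl
  rw [show (if j = i then (1:ℝ) else 0) = if i = j then (1:ℝ) else 0 from by
    by_cases h : i = j <;> simp [h, eq_comm]]
  field_simp
  rw [← hc2, Real.sqrt_sq hcpos.le]
  split_ifs <;> ring
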